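/- Let Φ : (0,∞) → ℝ have the Thomas–Fermi potential properties. Then for each fixed μ ≥ 0, the functions λ ↦ e_G(λ,μ) and λ ↦ n(λ,μ) are continuous on (0,∞). -/

import Mathlib

open MeasureTheory Real Filter Set

/-- The semiclassical grand canonical energy
`e_G(λ,μ) = −(2/(3π)) ∫₀^∞ (Φ(r) − λ²r⁻² − μ)₊^{3/2} dr`. -/
noncomputable def eG (Φ : ℝ → ℝ) (lam μ : ℝ) : ℝ :=
  -(2 / (3 * π)) * ∫ r in Ioi (0:ℝ), (max (Φ r - lam ^ 2 / r ^ 2 - μ) 0) ^ ((3:ℝ)/2)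

/-- The semiclassical counting function
`n(λ,μ) = (1/π) ∫₀^∞ (Φ(r) − λ²r⁻² − μ)₊^{1/2} dr`. -/
noncomputable def nSC (Φ : ℝ → ℝ) (lam μ : ℝ) : ℝ :=
  (1 / π) * ∫ r in Ioi (0:ℝ), (max (Φ r - lam ^ 2 / r ^ 2 - μ) 0) ^ ((1:ℝ)/2)

/-- `Φ` has the Thomas–Fermi potential properties: continuous and positive on `(0,∞)`,
`r·Φ(r) → 1` as `r → 0+`, and `Φ(r) ≤ C r⁻⁴` for `r ≥ 1`. -/
def HasTF (Φ : ℝ → ℝ) : Prop :=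
  ContinuousOn Φ (Ioi 0) ∧ (∀ r, 0 < r → 0 < Φ r) ∧
  Tendsto (fun r => r * Φ r) (nhdsWithin 0 (Ioi 0)) (nhds 1) ∧
  ∃ C, 0 < C ∧ ∀ r, 1 ≤ r → Φ r ≤ C / r ^ 4

lemma integral_continuousOn_aux (Φ : ℝ → ℝ) (hΦ : HasTF Φ) (μ : ℝ) (hμ : 0 ≤ μ)
    (p : ℝ) (hp : 0 < p) (hp4 : 1 < 4 * p) :
    ContinuousOn (fun lam : ℝ => ∫ r in Ioi (0:ℝ),
      (max (Φ r - lam ^ 2 / r ^ 2 - μ) 0) ^ p) (Ioi 0) := by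
  obtain ⟨hcont, hpos, hlim, C, hC, hCbound⟩ := hΦ
  intro lam₀ hlam₀
  apply ContinuousAt.continuousWithinAt
  have hlam₀' : 0 < lam₀ := hlam₀
  set a : ℝ := lam₀ / 2 with ha
  have ha0 : 0 < a := half_pos hlam₀'
  have h2 : ∀ᶠ r in nhdsWithin 0 (Ioi 0), r * Φ r < 2 :=
    hlim.eventually_lt_const one_lt_two
  obtain ⟨δ, hδ0, hδ⟩ : ∃ δ > (0:ℝ), ∀ r ∈ Ioc (0:ℝ) δ, r * Φ r < 2 := by
    rcases mem_nhdsGT_iff_exists_Ioc_subset.1 h2 with ⟨u, hu, hsub⟩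
    exact ⟨u, hu, fun r hr => hsub hr⟩
  set r₀ : ℝ := min δ (min (a ^ 2 / 2) 1) with hr₀def
  have hr₀0 : 0 < r₀ := lt_min hδ0 (lt_min (by positivity) one_pos)
  have hr₀1 : r₀ ≤ 1 := le_trans (min_le_right _ _) (min_le_right _ _)
  obtain ⟨M, hM⟩ := (isCompact_Icc (a := r₀) (b := 1)).exists_bound_of_continuousOn
    (hcont.mono (fun x hx => lt_of_lt_of_le hr₀0 hx.1))
  have hM0 : 0 ≤ M := le_trans (norm_nonneg _) (hM r₀ ⟨le_refl _, hr₀1⟩)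
  set g : ℝ → ℝ := fun r =>
    (Icc r₀ 1).indicator (fun _ => M ^ p) r +
    (Ioi 1).indicator (fun r => C ^ p * r ^ (-(4 * p))) r with hg
  have hg_int : Integrable g (volume.restrict (Ioi (0:ℝ))) := by
    apply Integrable.add
    · exact ((integrable_indicator_iff measurableSet_Icc).2
        (integrableOn_const measure_Icc_lt_top.ne)).restrict
    · refine ((integrable_indicator_iff measurableSet_Ioi).2 ?_).restrict
      exact (integrableOn_Ioi_rpow_of_lt (by linarith) one_pos).const_mul _
  have hmeas : ∀ lam : ℝ, AEStronglyMeasurable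
      (fun r => (max (Φ r - lam ^ 2 / r ^ 2 - μ) 0) ^ p) (volume.restrict (Ioi (0:ℝ))) := by
    intro lam
    apply ContinuousOn.aestronglyMeasurable _ measurableSet_Ioi
    apply ContinuousOn.rpow_const
    · exact ((hcont.sub (ContinuousOn.div continuousOn_const
        (continuous_pow 2).continuousOn
        (fun r hr => pow_ne_zero 2 (ne_of_gt hr)))).sub continuousOn_const).sup
        continuousOn_const
    · exact fun r _ => Or.inr hp.le
  have h_bound : ∀ᶠ lam in nhds lam₀, ∀ᵐ r ∂(volume.restrict (Ioi (0:ℝ))),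
      ‖(max (Φ r - lam ^ 2 / r ^ 2 - μ) 0) ^ p‖ ≤ g r := by
    filter_upwards [Ioi_mem_nhds (show a < lam₀ from half_lt_self hlam₀')] with lam hlam
    rw [ae_restrict_iff' measurableSet_Ioi]
    filter_upwards with r hr
    have hr0 : 0 < r := hr
    have hnn : (0:ℝ) ≤ max (Φ r - lam ^ 2 / r ^ 2 - μ) 0 := le_max_right _ _
    rw [Real.norm_eq_abs, abs_of_nonneg (Real.rpow_nonneg hnn p)]
    have hlam2 : a ^ 2 ≤ lam ^ 2 := by nlinarith [le_of_lt (show a < lam from hlam)]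
    rcases le_or_gt r r₀ with hcase | hcase
    · have hΦr : Φ r < 2 / r := by
        have h := hδ r ⟨hr0, le_trans hcase (min_le_left _ _)⟩
        rw [lt_div_iff₀ hr0]; linarith
      have hra : 2 * r ≤ a ^ 2 := by
        have := le_trans hcase (le_trans (min_le_right _ _) (min_le_left _ _))
        linarith
      have hneg : Φ r - lam ^ 2 / r ^ 2 - μ ≤ 0 := by
        have hdiv : 2 / r ≤ lam ^ 2 / r ^ 2 := by
          rw [div_le_div_iff₀ hr0 (by positivity)]
          nlinarith
        linarith
      rw [max_eq_right hneg, Real.zero_rpow hp.ne']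
      apply add_nonneg
      · exact Set.indicator_nonneg (fun _ _ => Real.rpow_nonneg hM0 p) _
      · refine Set.indicator_nonneg (fun x hx => ?_) _
        have hx0 : (0:ℝ) < x := lt_trans one_pos hx
        positivity
    · rcases le_or_gt r 1 with hcase1 | hcase1
      · have hΦM : Φ r ≤ M := le_trans (le_abs_self _) (hM r ⟨hcase.le, hcase1⟩)
        have hmax : max (Φ r - lam ^ 2 / r ^ 2 - μ) 0 ≤ M := by
          apply max_le _ hM0
          have : (0:ℝ) ≤ lam ^ 2 / r ^ 2 := by positivity
          linarith
        have h1 : (max (Φ r - lam ^ 2 / r ^ 2 - μ) 0) ^ p ≤ M ^ p :=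
          Real.rpow_le_rpow hnn hmax hp.le
        have hgr : g r = M ^ p + 0 := by
          rw [hg]
          simp [Set.indicator_of_mem (show r ∈ Icc r₀ 1 from ⟨hcase.le, hcase1⟩),
            Set.indicator_of_notMem (show r ∉ Ioi (1:ℝ) from not_lt.2 hcase1)]
        rw [hgr, add_zero]; exact h1
      · have hΦC : Φ r ≤ C / r ^ 4 := hCbound r hcase1.le
        have hmax : max (Φ r - lam ^ 2 / r ^ 2 - μ) 0 ≤ C / r ^ 4 := by
          apply max_le _ (by positivity)
          have : (0:ℝ) ≤ lam ^ 2 / r ^ 2 := by positivity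
          linarith
        have h1 : (max (Φ r - lam ^ 2 / r ^ 2 - μ) 0) ^ p ≤ (C / r ^ 4) ^ p :=
          Real.rpow_le_rpow hnn hmax hp.le
        have h2 : (C / r ^ 4) ^ p = C ^ p * r ^ (-(4 * p)) := by
          rw [Real.div_rpow hC.le (by positivity : (0:ℝ) ≤ r ^ 4),
            show (r : ℝ) ^ (4:ℕ) = r ^ ((4:ℕ):ℝ) from (Real.rpow_natCast r 4).symm,
            ← Real.rpow_mul hr0.le, Real.rpow_neg hr0.le, div_eq_mul_inv]
          norm_num
        have hgr : g r = 0 + C ^ p * r ^ (-(4 * p)) := by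
          rw [hg]
          simp [Set.indicator_of_notMem
              (show r ∉ Icc r₀ 1 from fun h => absurd h.2 (not_le.2 hcase1)),
            Set.indicator_of_mem (show r ∈ Ioi (1:ℝ) from hcase1)]
        rw [hgr, zero_add, ← h2]; exact h1
  have h_cont : ∀ᵐ r ∂(volume.restrict (Ioi (0:ℝ))),
      ContinuousAt (fun lam : ℝ => (max (Φ r - lam ^ 2 / r ^ 2 - μ) 0) ^ p) lam₀ := by
    rw [ae_restrict_iff' measurableSet_Ioi]
    filter_upwards with r hr
    have hinner : ContinuousAt (fun lam : ℝ => max (Φ r - lam ^ 2 / r ^ 2 - μ) 0) lam₀ :=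
      ((continuousAt_const.sub ((continuous_pow 2).continuousAt.div_const _)).sub
        continuousAt_const).max continuousAt_const
    exact (Real.continuousAt_rpow_const _ _ (Or.inr hp.le)).comp hinner
  exact continuousAt_of_dominated (Filter.Eventually.of_forall hmeas) h_bound hg_int h_cont

/-- For a Thomas–Fermi potential `Φ` and fixed `μ ≥ 0`, the maps
`λ ↦ e_G(λ,μ)` and `λ ↦ n(λ,μ)` are continuous on `(0,∞)`. -/

theorem eG_nSC_continuousOn (Φ : ℝ → ℝ) (hΦ : HasTF Φ) (μ : ℝ) (hμ : 0 ≤ μ) :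
    ContinuousOn (fun lam => eG Φ lam μ) (Ioi 0) ∧
    ContinuousOn (fun lam => nSC Φ lam μ) (Ioi 0) := by
  unfold eG nSC
  constructor
  · exact continuousOn_const.mul
      (integral_continuousOn_aux Φ hΦ μ hμ ((3:ℝ)/2) (by norm_num) (by norm_num))
  · exact continuousOn_const.mul
      (integral_continuousOn_aux Φ hΦ μ hμ ((1:ℝ)/2) (by norm_num) (by norm_num))
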